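/- If ν₁ and ν₂ are nonstandard probability measures over the same measurable space and ν₁ ≈ ν₂ (they induce the same expected-value comparisons on all random variables), then ν₁ ≃ ν₂: they have the same null sets, and st(ν₁(V | U)) = st(ν₂(V | U)) for all measurable V and all U with ν₁(U) ≠ 0. -/

import Mathlib

/-- The standard part of an element of an ordered field extension of `ℝ`. -/
noncomputable def stPart {K : Type*} [Field K] [LinearOrder K] [IsStrictOrderedRing K] (ι : ℝ →+* K) (b : K) : ℝ :=
  sInf {a : ℝ | b ≤ ι a}

open Classical in
lemma indPre {W : Type*} (A : Set W) (a x : ℝ) :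
    (A.indicator fun _ => a) ⁻¹' {x} =
      if x = a then (if a = 0 then Set.univ else A)
      else (if x = 0 then Aᶜ else ∅) := by
  ext w
  by_cases hw : w ∈ A <;> simp [Set.indicator, hw] <;> split_ifs <;> simp_all <;> tauto

lemma indRange {W : Type*} (A : Set W) (a : ℝ) :
    Set.range (A.indicator fun _ => a) ⊆ {0, a} := by
  rintro _ ⟨w, rfl⟩
  by_cases hw : w ∈ A <;> simp [Set.indicator, hw]

lemma indMem {W : Type*} {F : Set (Set W)} (huniv : Set.univ ∈ F)
    (hcompl : ∀ U ∈ F, Uᶜ ∈ F) {A : Set W} (hA : A ∈ F) (a : ℝ) :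
    ∀ x, (A.indicator fun _ => a) ⁻¹' {x} ∈ F := by
  intro x
  rw [indPre]
  have hempty : (∅ : Set W) ∈ F := by
    have := hcompl _ huniv
    simpa using this
  split_ifs <;> first | exact huniv | exact hA | exact hcompl _ hA | exact hempty

lemma expSum {W K : Type*} [Field K] [LinearOrder K] [IsStrictOrderedRing K] (ι : ℝ →+* K) (ν : Set W → K)
    (hempty : ν ∅ = 0) (A : Set W) (a : ℝ) (s : Finset ℝ)
    (hs : Set.range (A.indicator fun _ => a) ⊆ ↑s) :
    ∑ x ∈ s, ι x * ν ((A.indicator fun _ => a) ⁻¹' {x}) = ι a * ν A := by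
  by_cases ha : a = 0
  · subst ha
    rw [map_zero, zero_mul]
    apply Finset.sum_eq_zero
    intro x hx
    rw [indPre]
    by_cases hx0 : x = 0
    · simp [hx0]
    · simp [hx0, hempty]
  · have hterm : ∀ x ∈ s, ι x * ν ((A.indicator fun _ => a) ⁻¹' {x}) =
        if x = a then ι a * ν A else 0 := by
      intro x hx
      rw [indPre]
      by_cases hxa : x = a
      · simp [hxa, ha]
      · by_cases hx0 : x = 0 <;> simp [hxa, hx0, hempty, Ne.symm ha]
    rw [Finset.sum_congr rfl hterm, Finset.sum_ite_eq' s a (fun _ => ι a * ν A)]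
    by_cases has : a ∈ s
    · simp [has]
    · have hA0 : A = ∅ := by
        by_contra hne
        obtain ⟨w, hw⟩ := Set.nonempty_iff_ne_empty.mpr hne
        have : (A.indicator fun _ => a) w ∈ (↑s : Set ℝ) := hs ⟨w, rfl⟩
        simp [Set.indicator, hw] at this
        exact has this
      simp [has, hA0, hempty]

/-- If `ν₁` and `ν₂` are nonstandard probability measures over the same measurable space and
`ν₁ ≈ ν₂` (they induce the same expected-value comparisons on all random variables), then
`ν₁ ≃ ν₂`: they have the same null sets, and `st(ν₁(V | U)) = st(ν₂(V | U))` for all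
measurable `V` and all `U` with `ν₁(U) ≠ 0`. -/
theorem stmt16 {W : Type*} {F : Set (Set W)}
    {K₁ K₂ : Type*} [Field K₁] [LinearOrder K₁] [IsStrictOrderedRing K₁]
    [Field K₂] [LinearOrder K₂] [IsStrictOrderedRing K₂]
    (ι₁ : ℝ →+* K₁) (hι₁ : Monotone ι₁)
    (hna₁ : ∃ η : K₁, 0 < η ∧ ∀ r : ℝ, 0 < r → η < ι₁ r)
    (ι₂ : ℝ →+* K₂) (hι₂ : Monotone ι₂)
    (hna₂ : ∃ η : K₂, 0 < η ∧ ∀ r : ℝ, 0 < r → η < ι₂ r)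
    (huniv : Set.univ ∈ F) (hcompl : ∀ U ∈ F, Uᶜ ∈ F)
    (hunion : ∀ U ∈ F, ∀ V ∈ F, U ∪ V ∈ F) (hinter : ∀ U ∈ F, ∀ V ∈ F, U ∩ V ∈ F)
    (ν₁ : Set W → K₁) (ν₂ : Set W → K₂)
    (hν₁nn : ∀ U ∈ F, 0 ≤ ν₁ U) (hν₁tot : ν₁ Set.univ = 1)
    (hν₁add : ∀ U ∈ F, ∀ V ∈ F, Disjoint U V → ν₁ (U ∪ V) = ν₁ U + ν₁ V)
    (hν₂nn : ∀ U ∈ F, 0 ≤ ν₂ U) (hν₂tot : ν₂ Set.univ = 1)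
    (hν₂add : ∀ U ∈ F, ∀ V ∈ F, Disjoint U V → ν₂ (U ∪ V) = ν₂ U + ν₂ V)
    (hequiv : ∀ X Y : W → ℝ, (∀ x, X ⁻¹' {x} ∈ F) → (∀ x, Y ⁻¹' {x} ∈ F) →
      ∀ s : Finset ℝ, Set.range X ⊆ ↑s → Set.range Y ⊆ ↑s →
        ((∑ x ∈ s, ι₁ x * ν₁ (X ⁻¹' {x})) ≤ (∑ x ∈ s, ι₁ x * ν₁ (Y ⁻¹' {x})) ↔
         (∑ x ∈ s, ι₂ x * ν₂ (X ⁻¹' {x})) ≤ (∑ x ∈ s, ι₂ x * ν₂ (Y ⁻¹' {x})))) :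
    (∀ U ∈ F, ν₁ U = 0 ↔ ν₂ U = 0) ∧
    (∀ U ∈ F, ∀ V ∈ F, ν₁ U ≠ 0 →
      stPart ι₁ (ν₁ (V ∩ U) / ν₁ U) = stPart ι₂ (ν₂ (V ∩ U) / ν₂ U)) := by
  have hFempty : (∅ : Set W) ∈ F := by
    have := hcompl _ huniv; simpa using this
  have hν₁e : ν₁ ∅ = 0 := by
    have := hν₁add ∅ hFempty ∅ hFempty (by simp)
    simp at this; linarith [this]
  have hν₂e : ν₂ ∅ = 0 := by
    have := hν₂add ∅ hFempty ∅ hFempty (by simp)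
    simp at this; linarith [this]
  have key : ∀ A ∈ F, ∀ B ∈ F, ∀ a b : ℝ,
      (ι₁ a * ν₁ A ≤ ι₁ b * ν₁ B ↔ ι₂ a * ν₂ A ≤ ι₂ b * ν₂ B) := by
    intro A hA B hB a b
    have h := hequiv (A.indicator fun _ => a) (B.indicator fun _ => b)
      (indMem huniv hcompl hA a) (indMem huniv hcompl hB b)
      ({0, a, b} : Finset ℝ)
      ((indRange A a).trans (by intro x hx; simp at hx ⊢; tauto))
      ((indRange B b).trans (by intro x hx; simp at hx ⊢; tauto))
    rwa [expSum ι₁ ν₁ hν₁e A a _ ((indRange A a).trans (by intro x hx; simp at hx ⊢; tauto)),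
      expSum ι₁ ν₁ hν₁e B b _ ((indRange B b).trans (by intro x hx; simp at hx ⊢; tauto)),
      expSum ι₂ ν₂ hν₂e A a _ ((indRange A a).trans (by intro x hx; simp at hx ⊢; tauto)),
      expSum ι₂ ν₂ hν₂e B b _ ((indRange B b).trans (by intro x hx; simp at hx ⊢; tauto))] at h
  have part1 : ∀ U ∈ F, (ν₁ U = 0 ↔ ν₂ U = 0) := by
    intro U hU
    have h := key U hU U hU 1 0
    simp only [map_one, one_mul, map_zero, zero_mul] at h
    constructor
    · intro h1
      exact le_antisymm (h.mp (le_of_eq h1)) (hν₂nn U hU)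
    · intro h2
      exact le_antisymm (h.mpr (le_of_eq h2)) (hν₁nn U hU)
  refine ⟨part1, ?_⟩
  intro U hU V hV h1
  have hVU : V ∩ U ∈ F := hinter V hV U hU
  have h2 : ν₂ U ≠ 0 := fun h => h1 ((part1 U hU).mpr h)
  have hpos₁ : 0 < ν₁ U := lt_of_le_of_ne (hν₁nn U hU) (Ne.symm h1)
  have hpos₂ : 0 < ν₂ U := lt_of_le_of_ne (hν₂nn U hU) (Ne.symm h2)
  have hset : {c : ℝ | ν₁ (V ∩ U) / ν₁ U ≤ ι₁ c} = {c : ℝ | ν₂ (V ∩ U) / ν₂ U ≤ ι₂ c} := by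
    ext c
    simp only [Set.mem_setOf_eq]
    rw [div_le_iff₀ hpos₁, div_le_iff₀ hpos₂]
    have h := key (V ∩ U) hVU U hU 1 c
    simpa using h
  simp only [stPart]
  rw [hset]
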